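/- Let G be a graph on n vertices (n even) with δ(G) ≥ 3n/4, and let E(G) = E₁ ∪ E₂ be a 2-multicoloring of its edges (an edge may receive both colors). Suppose H₁ is a connected component of G₁ = (V(G), E₁) with V(H₁) = V(G), and every connected component of G₂ = (V(G), E₂) has at most n/2 vertices. Then G₁ contains a perfect matching whose every edge joins two distinct components of G₂. -/

import Mathlib

open SimpleGraph Set

namespace PureMatchingAux

variable {V : Type} [Fintype V]

/-- The graph of `G₁`-edges joining distinct `G₂`-components. -/
def pureH (G₁ G₂ : SimpleGraph V) : SimpleGraph V where
  Adj a b := G₁.Adj a b ∧ G₂.connectedComponentMk a ≠ G₂.connectedComponentMk b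
  symm := ⟨fun a b h => ⟨h.1.symm, Ne.symm h.2⟩⟩
  loopless := ⟨fun a h => h.2 rfl⟩

lemma pureH_le (G₁ G₂ : SimpleGraph V) : pureH G₁ G₂ ≤ G₁ := by
  intro a b h
  exact h.1

lemma pureH_of_adj {G G₁ G₂ : SimpleGraph V} (hcol : G₁ ⊔ G₂ = G) {a b : V}
    (h : G.Adj a b) (hne : G₂.connectedComponentMk a ≠ G₂.connectedComponentMk b) :
    (pureH G₁ G₂).Adj a b := by
  rw [← hcol] at h
  rcases h with h1 | h2
  · exact ⟨h1, hne⟩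
  · exact absurd (SimpleGraph.ConnectedComponent.connectedComponentMk_eq_of_adj h2) hne

private lemma partner_exists {H : SimpleGraph V} {M : H.Subgraph} (hM : M.IsMatching) :
    ∃ f : V → V, (∀ ⦃x⦄, x ∈ M.verts → M.Adj x (f x)) ∧ (∀ ⦃x y⦄, M.Adj x y → f x = y) := by
  classical
  refine ⟨fun x => if hx : x ∈ M.verts then (hM hx).choose else x, fun x hx => ?_, fun x y hxy => ?_⟩
  · simp only [dif_pos hx]
    exact (hM hx).choose_spec.1
  · have hx : x ∈ M.verts := M.edge_vert hxy
    simp only [dif_pos hx]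
    exact ((hM hx).choose_spec.2 y hxy).symm

private lemma del_pair {H : SimpleGraph V} {M : H.Subgraph} (hM : M.IsMatching)
    {x y : V} (hxy : M.Adj x y) : (M.deleteVerts {x, y}).IsMatching := by
  intro v hv
  rw [Subgraph.deleteVerts_verts] at hv
  obtain ⟨hv1, hv2⟩ := hv
  obtain ⟨p, hp, hpu⟩ := hM hv1
  simp only [Set.mem_insert_iff, Set.mem_singleton_iff, not_or] at hv2
  obtain ⟨hvx, hvy⟩ := hv2
  have hpx : p ≠ x := by
    rintro rfl
    obtain ⟨p', hp', hpu'⟩ := hM (M.edge_vert hxy)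
    exact hvy ((hpu' v hp.symm).trans (hpu' y hxy).symm)
  have hpy : p ≠ y := by
    rintro rfl
    obtain ⟨p', hp', hpu'⟩ := hM (M.edge_vert hxy.symm)
    exact hvx ((hpu' v hp.symm).trans (hpu' x hxy.symm).symm)
  refine ⟨p, ?_, fun z hz => hpu z (Subgraph.deleteVerts_adj.mp hz).2.2.2.2⟩
  show (M.deleteVerts {x, y}).Adj v p
  rw [Subgraph.deleteVerts_adj]
  refine ⟨hv1, by simp [hvx, hvy], M.edge_vert hp.symm, by simp [hpx, hpy], hp⟩

private lemma sup_edge {H : SimpleGraph V} {M : H.Subgraph} (hM : M.IsMatching)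
    {a b : V} (hab : H.Adj a b) (ha : a ∉ M.verts) (hb : b ∉ M.verts) :
    ∃ M' : H.Subgraph, M'.IsMatching ∧ M'.verts = M.verts ∪ {a, b} := by
  refine ⟨M ⊔ H.subgraphOfAdj hab, ?_, ?_⟩
  · refine hM.sup (Subgraph.IsMatching.subgraphOfAdj hab) ?_
    refine Set.disjoint_left.mpr fun z hz hz' => ?_
    have hz1 := M.support_subset_verts hz
    have hz2 := (H.subgraphOfAdj hab).support_subset_verts hz'
    simp only [subgraphOfAdj_verts, Set.mem_insert_iff, Set.mem_singleton_iff] at hz2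
    rcases hz2 with rfl | rfl
    · exact ha hz1
    · exact hb hz1
  · rw [Subgraph.verts_sup, subgraphOfAdj_verts]

private lemma aug1 {H : SimpleGraph V} {M : H.Subgraph} (hM : M.IsMatching)
    {x y a : V} (hxy : M.Adj x y) (hax : H.Adj a x) (ha : a ∉ M.verts) :
    ∃ M' : H.Subgraph, M'.IsMatching ∧ M'.verts = (M.verts \ {x, y}) ∪ {a, x} ∧
      (∀ ⦃s t : V⦄, M.Adj s t → s ∉ ({x, y} : Set V) → t ∉ ({x, y} : Set V) → M'.Adj s t) := by
  refine ⟨M.deleteVerts {x, y} ⊔ H.subgraphOfAdj hax, ?_, ?_, ?_⟩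
  · refine (del_pair hM hxy).sup (Subgraph.IsMatching.subgraphOfAdj hax) ?_
    refine Set.disjoint_left.mpr fun z hz hz' => ?_
    have hz1 := (M.deleteVerts {x, y}).support_subset_verts hz
    have hz2 := (H.subgraphOfAdj hax).support_subset_verts hz'
    rw [Subgraph.deleteVerts_verts] at hz1
    simp only [subgraphOfAdj_verts, Set.mem_insert_iff, Set.mem_singleton_iff] at hz2
    rcases hz2 with rfl | rfl
    · exact ha hz1.1
    · exact hz1.2 (by simp)
  · rw [Subgraph.verts_sup, Subgraph.deleteVerts_verts, subgraphOfAdj_verts]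
  · intro s t hst hs ht
    exact Or.inl (Subgraph.deleteVerts_adj.mpr
      ⟨M.edge_vert hst, hs, M.edge_vert hst.symm, ht, hst⟩)

private lemma aug2 {H : SimpleGraph V} {M : H.Subgraph} (hM : M.IsMatching)
    {x y a b : V} (hxy : M.Adj x y) (hax : H.Adj a x) (hby : H.Adj b y)
    (ha : a ∉ M.verts) (hb : b ∉ M.verts) (hab : a ≠ b) :
    ∃ M' : H.Subgraph, M'.IsMatching ∧ M'.verts = M.verts ∪ {a, b} := by
  have hxv : x ∈ M.verts := M.edge_vert hxy
  have hyv : y ∈ M.verts := M.edge_vert hxy.symm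
  have hxyne : x ≠ y := (M.adj_sub hxy).ne
  obtain ⟨M1, hM1, hv1, -⟩ := aug1 hM hxy hax ha
  have hb1 : b ∉ M1.verts := by
    rw [hv1]
    rintro (⟨hbm, -⟩ | hb2)
    · exact hb hbm
    · simp only [Set.mem_insert_iff, Set.mem_singleton_iff] at hb2
      rcases hb2 with rfl | rfl
      · exact hab rfl
      · exact hb hxv
  have hy1 : y ∉ M1.verts := by
    rw [hv1]
    rintro (⟨-, hy2⟩ | hy2)
    · exact hy2 (by simp)
    · simp only [Set.mem_insert_iff, Set.mem_singleton_iff] at hy2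
      rcases hy2 with rfl | rfl
      · exact ha hyv
      · exact hxyne rfl
  obtain ⟨M2, hM2, hv2⟩ := sup_edge hM1 hby hb1 hy1
  refine ⟨M2, hM2, ?_⟩
  rw [hv2, hv1]
  ext z
  simp only [Set.mem_union, Set.mem_diff, Set.mem_insert_iff, Set.mem_singleton_iff]
  constructor
  · rintro ((⟨hz, -⟩ | h) | h)
    · exact Or.inl hz
    · rcases h with rfl | rfl
      · exact Or.inr (Or.inl rfl)
      · exact Or.inl hxv
    · rcases h with rfl | rfl
      · exact Or.inr (Or.inr rfl)
      · exact Or.inl hyv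
  · rintro (hz | h)
    · by_cases hzx : z = x
      · exact Or.inl (Or.inr (Or.inr hzx))
      · by_cases hzy : z = y
        · exact Or.inr (Or.inr hzy)
        · exact Or.inl (Or.inl ⟨hz, by simp [hzx, hzy]⟩)
    · rcases h with rfl | rfl
      · exact Or.inl (Or.inr (Or.inl rfl))
      · exact Or.inr (Or.inl rfl)

private lemma ncard_aug {s : Set V} {a b : V} (ha : a ∉ s) (hb : b ∉ s) (hab : a ≠ b) :
    (s ∪ {a, b}).ncard = s.ncard + 2 := by
  have hd : Disjoint s {a, b} := by
    rw [Set.disjoint_right]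
    intro z hz
    simp only [Set.mem_insert_iff, Set.mem_singleton_iff] at hz
    rcases hz with rfl | rfl
    · exact ha
    · exact hb
  rw [Set.ncard_union_eq hd, Set.ncard_pair hab]

private lemma ncard_swap {s : Set V} {x y a b : V} (hx : x ∈ s) (hy : y ∈ s) (hxy : x ≠ y)
    (hab : a ≠ b) (ha : a ∉ s \ {x, y}) (hb : b ∉ s \ {x, y}) :
    ((s \ {x, y}) ∪ {a, b}).ncard = s.ncard := by
  have hsub : ({x, y} : Set V) ⊆ s := by
    intro z hz
    simp only [Set.mem_insert_iff, Set.mem_singleton_iff] at hz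
    rcases hz with rfl | rfl
    · exact hx
    · exact hy
  have h2 : ({x, y} : Set V).ncard = 2 := Set.ncard_pair hxy
  have h2' : ({a, b} : Set V).ncard = 2 := Set.ncard_pair hab
  have hd : Disjoint (s \ {x, y}) {a, b} := by
    rw [Set.disjoint_right]
    intro z hz
    simp only [Set.mem_insert_iff, Set.mem_singleton_iff] at hz
    rcases hz with rfl | rfl
    · exact ha
    · exact hb
  have hcs : 2 ≤ s.ncard := by
    calc 2 = ({x, y} : Set V).ncard := h2.symm
    _ ≤ s.ncard := Set.ncard_le_ncard hsub
  rw [Set.ncard_union_eq hd, Set.ncard_diff hsub, h2, h2']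
  omega

/-- Lemma A: a matching having two uncovered vertices lying in *different*
`G₂`-components can be enlarged. -/
private lemma lemA {G G₁ G₂ : SimpleGraph V}
    (hcol : G₁ ⊔ G₂ = G)
    (hδ : ∀ v : V, 3 * Fintype.card V ≤ 4 * (G.neighborSet v).ncard)
    {M : (pureH G₁ G₂).Subgraph} (hM : M.IsMatching) {u w : V}
    (hu : u ∉ M.verts) (hw : w ∉ M.verts) (huw : u ≠ w)
    (hcne : G₂.connectedComponentMk u ≠ G₂.connectedComponentMk w) :
    ∃ M' : (pureH G₁ G₂).Subgraph, M'.IsMatching ∧ M.verts.ncard < M'.verts.ncard := by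
  classical
  have hScard : Fintype.card V ≤ 2 * (G.neighborSet u ∩ G.neighborSet w).ncard := by
    have h1 := Set.ncard_union_add_ncard_inter (G.neighborSet u) (G.neighborSet w)
    have h2 : (G.neighborSet u ∪ G.neighborSet w).ncard ≤ Fintype.card V := by
      have := Set.ncard_le_ncard (Set.subset_univ (G.neighborSet u ∪ G.neighborSet w))
      simpa [Set.ncard_univ, Nat.card_eq_fintype_card] using this
    have h3 := hδ u
    have h4 := hδ w
    omega
  obtain ⟨f, hf, hfu⟩ := partner_exists hM
  have hff : ∀ ⦃x⦄, x ∈ M.verts → f (f x) = x := fun x hx => hfu (hf hx).symm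
  by_cases hall : ∀ x ∈ G.neighborSet u ∩ G.neighborSet w, x ∈ M.verts
  · -- all common neighbours covered; find a matching edge inside the common neighbourhood
    have hxy : ∃ x ∈ G.neighborSet u ∩ G.neighborSet w,
        f x ∈ G.neighborSet u ∩ G.neighborSet w := by
      by_contra hno
      push_neg at hno
      set S := G.neighborSet u ∩ G.neighborSet w with hS
      have hinj : Set.InjOn f S := by
        intro x1 h1 x2 h2 he
        rw [← hff (hall x1 h1), he, hff (hall x2 h2)]
      have himg : f '' S ⊆ M.verts := by
        rintro z ⟨x, hx, rfl⟩
        exact M.edge_vert (hf (hall x hx)).symm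
      have hdisj : Disjoint S (f '' S) := by
        rw [Set.disjoint_right]
        rintro z ⟨x, hx, rfl⟩
        exact hno x hx
      have hcard1 : (S ∪ f '' S).ncard = 2 * S.ncard := by
        rw [Set.ncard_union_eq hdisj, Set.ncard_image_of_injOn hinj]
        omega
      have hsub : S ∪ f '' S ⊆ M.verts := Set.union_subset (fun x hx => hall x hx) himg
      have hup : M.verts ⊆ Set.univ \ {u, w} := by
        intro z hz
        refine ⟨trivial, ?_⟩
        simp only [Set.mem_insert_iff, Set.mem_singleton_iff]
        rintro (rfl | rfl)
        · exact hu hz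
        · exact hw hz
      have hc2 : (Set.univ \ ({u, w} : Set V)).ncard = Fintype.card V - 2 := by
        rw [Set.ncard_diff (Set.subset_univ _), Set.ncard_univ, Nat.card_eq_fintype_card,
          Set.ncard_pair huw]
      have hle := Set.ncard_le_ncard (hsub.trans hup)
      rw [hcard1, hc2] at hle
      have hle2 : 2 ≤ Fintype.card V := by
        have : ({u, w} : Set V).ncard ≤ Fintype.card V := by
          have := Set.ncard_le_ncard (Set.subset_univ ({u, w} : Set V))
          simpa [Set.ncard_univ, Nat.card_eq_fintype_card] using this
        rwa [Set.ncard_pair huw] at this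
      omega
    obtain ⟨x, hxS, hyS⟩ := hxy
    have hMxy : M.Adj x (f x) := hf (hall x hxS)
    set y := f x with hydef
    have hHxy : (pureH G₁ G₂).Adj x y := M.adj_sub hMxy
    have hcxy : G₂.connectedComponentMk x ≠ G₂.connectedComponentMk y := hHxy.2
    have hux : G.Adj u x := hxS.1
    have hwx : G.Adj w x := hxS.2
    have huy : G.Adj u y := hyS.1
    have hwy : G.Adj w y := hyS.2
    have finish : ∀ a b : V, a ∉ M.verts → b ∉ M.verts → a ≠ b →
        (pureH G₁ G₂).Adj a x → (pureH G₁ G₂).Adj b y →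
        ∃ M' : (pureH G₁ G₂).Subgraph, M'.IsMatching ∧ M.verts.ncard < M'.verts.ncard := by
      intro a b ha hb hab hax hby
      obtain ⟨M', hM', hv'⟩ := aug2 hM hMxy hax hby ha hb hab
      refine ⟨M', hM', ?_⟩
      rw [hv', ncard_aug ha hb hab]
      omega
    by_cases h1 : G₂.connectedComponentMk x = G₂.connectedComponentMk u
    · have hax : (pureH G₁ G₂).Adj w x :=
        pureH_of_adj hcol hwx (fun h => hcne (h.trans h1).symm)
      by_cases h2 : G₂.connectedComponentMk y = G₂.connectedComponentMk u
      · exact absurd (h1.trans h2.symm) hcxy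
      · have hby : (pureH G₁ G₂).Adj u y := pureH_of_adj hcol huy (fun h => h2 h.symm)
        exact finish w u hw hu huw.symm hax hby
    · have hax : (pureH G₁ G₂).Adj u x := pureH_of_adj hcol hux (fun h => h1 h.symm)
      by_cases h2 : G₂.connectedComponentMk y = G₂.connectedComponentMk w
      · have hby' : (pureH G₁ G₂).Adj u y :=
          pureH_of_adj hcol huy (fun h => hcne (h.trans h2))
        have hax' : (pureH G₁ G₂).Adj w x :=
          pureH_of_adj hcol hwx (fun h => hcxy (h.symm.trans h2.symm))
        exact finish w u hw hu huw.symm hax' hby'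
      · have hby : (pureH G₁ G₂).Adj w y := pureH_of_adj hcol hwy (fun h => h2 h.symm)
        exact finish u w hu hw huw hax hby
  · -- some common neighbour is uncovered: add an edge to it
    push_neg at hall
    obtain ⟨x, hxS, hxM⟩ := hall
    have hgu : G.Adj u x := hxS.1
    have hgw : G.Adj w x := hxS.2
    by_cases hcx : G₂.connectedComponentMk x = G₂.connectedComponentMk u
    · have hH : (pureH G₁ G₂).Adj w x :=
        pureH_of_adj hcol hgw (fun h => hcne (h.trans hcx).symm)
      obtain ⟨M', hM', hv'⟩ := sup_edge hM hH hw hxM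
      refine ⟨M', hM', ?_⟩
      rw [hv', ncard_aug hw hxM hgw.ne]
      omega
    · have hH : (pureH G₁ G₂).Adj u x := pureH_of_adj hcol hgu (fun h => hcx h.symm)
      obtain ⟨M', hM', hv'⟩ := sup_edge hM hH hu hxM
      refine ⟨M', hM', ?_⟩
      rw [hv', ncard_aug hu hxM hgu.ne]
      omega

end PureMatchingAux

open PureMatchingAux

/-- let `G` be a graph on an even number `n` of vertices with
`δ(G) ≥ 3n/4` and a 2-multicoloring `E(G) = E₁ ∪ E₂` (i.e. `G₁ ⊔ G₂ = G`).  If `G₁` is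
connected (its unique component spans `V(G)`) and every connected component of `G₂` has
at most `n/2` vertices, then `G₁` has a perfect matching each of whose edges joins two
distinct components of `G₂`. -/
theorem lemma_pureconnectedmatching_red {V : Type} [Fintype V]
    (G G₁ G₂ : SimpleGraph V) (n : ℕ) (hn : Fintype.card V = n) (hev : Even n)
    (hδ : ∀ v : V, (3 : ℝ) / 4 * n ≤ ((G.neighborSet v).ncard : ℝ))
    (hcol : G₁ ⊔ G₂ = G)
    (hconn : G₁.Connected)
    (hcomp : ∀ c : G₂.ConnectedComponent, ((c.supp.ncard : ℝ)) ≤ n / 2) :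
    ∃ M : G₁.Subgraph, M.IsPerfectMatching ∧
      ∀ u v : V, M.Adj u v →
        G₂.connectedComponentMk u ≠ G₂.connectedComponentMk v := by
  classical
  subst hn
  have hδ4 : ∀ v : V, 3 * Fintype.card V ≤ 4 * (G.neighborSet v).ncard := by
    intro v
    have h := hδ v
    have h' : (3 * Fintype.card V : ℝ) ≤ 4 * ((G.neighborSet v).ncard : ℝ) := by linarith
    exact_mod_cast h'
  have hcomp2 : ∀ c : G₂.ConnectedComponent, 2 * c.supp.ncard ≤ Fintype.card V := by
    intro c
    have h := hcomp c
    have h' : (2 * c.supp.ncard : ℝ) ≤ (Fintype.card V : ℝ) := by linarith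
    exact_mod_cast h'
  -- a maximum matching of `pureH G₁ G₂`
  set P : ℕ → Prop := fun k =>
    ∃ M : (pureH G₁ G₂).Subgraph, M.IsMatching ∧ M.verts.ncard = k with hPdef
  have hP0 : P 0 := by
    refine ⟨⊥, ?_, by simp [Subgraph.verts_bot]⟩
    intro v hv
    rw [Subgraph.verts_bot] at hv
    exact absurd hv (Set.notMem_empty v)
  have hPle : ∀ k, P k → k ≤ Fintype.card V := by
    rintro k ⟨M, -, rfl⟩
    have := Set.ncard_le_ncard (Set.subset_univ M.verts)
    simpa [Set.ncard_univ, Nat.card_eq_fintype_card] using this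
  set K := Nat.findGreatest P (Fintype.card V) with hKdef
  have hPK : P K := Nat.findGreatest_spec (Nat.zero_le _) hP0
  obtain ⟨M, hM, hMcard⟩ := hPK
  have hmax : ∀ M' : (pureH G₁ G₂).Subgraph, M'.IsMatching → M'.verts.ncard ≤ K :=
    fun M' hM' => Nat.le_findGreatest (hPle _ ⟨M', hM', rfl⟩) ⟨M', hM', rfl⟩
  by_cases hKn : M.verts = Set.univ
  · -- the maximum matching is perfect
    refine ⟨M.map (SimpleGraph.Hom.ofLE (pureH_le G₁ G₂)), ⟨hM.map_ofLE _, ?_⟩, ?_⟩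
    · intro v
      rw [Subgraph.map_verts, hKn]
      exact ⟨v, trivial, rfl⟩
    · intro a b hab
      rw [Subgraph.map_adj] at hab
      obtain ⟨a', b', hab', ha, hb⟩ := hab
      have ha' : a' = a := ha
      have hb' : b' = b := hb
      subst ha'
      subst hb'
      exact (M.adj_sub hab').2
  · exfalso
    have hKlt : K < Fintype.card V := by
      rcases lt_or_eq_of_le (hPle K ⟨M, hM, hMcard⟩) with h | h
      · exact h
      · refine absurd (Set.eq_of_subset_of_ncard_le (Set.subset_univ _) ?_ (Set.toFinite _)) hKn
        rw [Set.ncard_univ, Nat.card_eq_fintype_card, hMcard, h]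
    set U := Set.univ \ M.verts with hUdef
    have hUcard : U.ncard = Fintype.card V - K := by
      rw [hUdef, Set.ncard_diff (Set.subset_univ _), Set.ncard_univ,
        Nat.card_eq_fintype_card, hMcard]
    have hKeven : Even K := by
      haveI : Fintype (M.verts) := Fintype.ofFinite _
      have h := hM.even_card
      rwa [← Set.ncard_eq_toFinset_card', hMcard] at h
    have hU2 : 2 ≤ U.ncard := by
      obtain ⟨k1, hk1⟩ := hev
      obtain ⟨k2, hk2⟩ := hKeven
      omega
    have hUpos : 0 < U.ncard := by omega
    obtain ⟨u, hu⟩ : U.Nonempty := (Set.ncard_pos (Set.toFinite U)).mp hUpos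
    obtain ⟨w, hwU, hwu⟩ := Set.exists_ne_of_one_lt_ncard (show 1 < U.ncard by omega) u
    have huM : u ∉ M.verts := hu.2
    have hwM : w ∉ M.verts := hwU.2
    have noA : ∀ M' : (pureH G₁ G₂).Subgraph, M'.IsMatching → M'.verts.ncard = K →
        ∀ a b : V, a ∉ M'.verts → b ∉ M'.verts → a ≠ b →
        G₂.connectedComponentMk a ≠ G₂.connectedComponentMk b → False := by
      intro M' hM' hcard a b ha hb hab hc
      obtain ⟨M'', hM'', hlt⟩ := lemA hcol hδ4 hM' ha hb hab hc
      have := hmax M'' hM''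
      omega
    set C := G₂.connectedComponentMk u with hCdef
    have hUC : ∀ v ∈ U, G₂.connectedComponentMk v = C := by
      intro v hv
      by_cases hvu : v = u
      · rw [hvu, hCdef]
      · by_contra hne
        exact noA M hM hMcard u v huM hv.2 (Ne.symm hvu)
          (by rw [← hCdef]; exact fun h => hne h.symm)
    have hwC : G₂.connectedComponentMk w = C := hUC w hwU
    obtain ⟨f, hf, hfu⟩ := partner_exists hM
    have hff : ∀ ⦃x⦄, x ∈ M.verts → f (f x) = x := fun x hx => hfu (hf hx).symm
    have hfv : ∀ ⦃x⦄, x ∈ M.verts → f x ∈ M.verts := fun x hx => M.edge_vert (hf hx).symm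
    have hfne : ∀ ⦃x⦄, x ∈ M.verts → f x ≠ x := by
      intro x hx h
      have := M.adj_sub (hf hx)
      rw [h] at this
      exact (pureH G₁ G₂).loopless.irrefl x this
    have hcross : ∀ ⦃x⦄, x ∈ M.verts →
        G₂.connectedComponentMk x ≠ G₂.connectedComponentMk (f x) :=
      fun x hx => (M.adj_sub (hf hx)).2
    -- there is a matching edge entirely outside `C`
    have houtside : ∃ q ∈ M.verts, G₂.connectedComponentMk q ≠ C ∧
        G₂.connectedComponentMk (f q) ≠ C := by
      by_contra hcon
      push_neg at hcon
      set A := {x ∈ M.verts | G₂.connectedComponentMk x = C} with hAdef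
      set B := {x ∈ M.verts | G₂.connectedComponentMk x ≠ C} with hBdef
      have hfAB : ∀ x ∈ A, f x ∈ B := by
        rintro x ⟨hxv, hxc⟩
        exact ⟨hfv hxv, fun h => hcross hxv (by rw [hxc, h])⟩
      have hfBA : ∀ x ∈ B, f x ∈ A := by
        rintro x ⟨hxv, hxc⟩
        exact ⟨hfv hxv, hcon x hxv hxc⟩
      have hAB : A.ncard ≤ B.ncard := by
        have h1 : f '' A ⊆ B := by
          rintro z ⟨x, hx, rfl⟩
          exact hfAB x hx
        have h2 : Set.InjOn f A := fun x1 hx1 x2 hx2 he => by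
          rw [← hff hx1.1, he, hff hx2.1]
        calc A.ncard = (f '' A).ncard := (Set.ncard_image_of_injOn h2).symm
        _ ≤ B.ncard := Set.ncard_le_ncard h1
      have hBA : B.ncard ≤ A.ncard := by
        have h1 : f '' B ⊆ A := by
          rintro z ⟨x, hx, rfl⟩
          exact hfBA x hx
        have h2 : Set.InjOn f B := fun x1 hx1 x2 hx2 he => by
          rw [← hff hx1.1, he, hff hx2.1]
        calc B.ncard = (f '' B).ncard := (Set.ncard_image_of_injOn h2).symm
        _ ≤ A.ncard := Set.ncard_le_ncard h1
      have hABdisj : Disjoint A B := by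
        rw [Set.disjoint_left]
        rintro z ⟨-, hz⟩ ⟨-, hz'⟩
        exact hz' hz
      have hABunion : A ∪ B = M.verts := by
        ext z
        by_cases hz : G₂.connectedComponentMk z = C <;>
          simp [hAdef, hBdef, hz]
      have hABtot : A.ncard + B.ncard = K := by
        rw [← Set.ncard_union_eq hABdisj, hABunion, hMcard]
      have hAU : A.ncard + U.ncard ≤ C.supp.ncard := by
        have hsub : A ∪ U ⊆ C.supp := by
          rintro z (⟨-, hz⟩ | hz)
          · exact (ConnectedComponent.mem_supp_iff C z).mpr hz
          · exact (ConnectedComponent.mem_supp_iff C z).mpr (hUC z hz)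
        have hdisj : Disjoint A U := by
          rw [Set.disjoint_left]
          rintro z ⟨hz, -⟩ hz'
          exact hz'.2 hz
        calc A.ncard + U.ncard = (A ∪ U).ncard := (Set.ncard_union_eq hdisj).symm
        _ ≤ C.supp.ncard := Set.ncard_le_ncard hsub
      have hcs := hcomp2 C
      omega
    obtain ⟨q, hqv, hqc, hfqc⟩ := houtside
    have hK2 : 2 ≤ K := by
      have hsub : ({q, f q} : Set V) ⊆ M.verts := by
        intro z hz
        simp only [Set.mem_insert_iff, Set.mem_singleton_iff] at hz
        rcases hz with rfl | rfl
        · exact hqv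
        · exact hfv hqv
      have := Set.ncard_le_ncard hsub
      rwa [Set.ncard_pair (hfne hqv).symm, hMcard] at this
    -- every `pureH`-neighbour of `u` is covered
    have hNcov : ∀ y, (pureH G₁ G₂).Adj u y → y ∈ M.verts := by
      intro y hy
      by_contra hyM
      obtain ⟨M', hM', hv'⟩ := sup_edge hM hy huM hyM
      have hcard' : M'.verts.ncard = K + 2 := by
        rw [hv', ncard_aug huM hyM hy.ne, hMcard]
      have := hmax M' hM'
      omega
    -- partners of `pureH`-neighbours of `u` lie in `C`
    have hpart : ∀ y, (pureH G₁ G₂).Adj u y → G₂.connectedComponentMk (f y) = C := by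
      intro y hy
      by_contra hfyC
      have hyv := hNcov y hy
      obtain ⟨M₁, hM₁, hv₁, -⟩ := aug1 hM (hf hyv) hy huM
      have huy' : u ≠ y := fun h => huM (by rw [h]; exact hyv)
      have hcard₁ : M₁.verts.ncard = K := by
        rw [hv₁, ← hMcard]
        exact ncard_swap hyv (hfv hyv) (hfne hyv).symm huy'
          (fun h => huM h.1) (fun h => h.2 (by simp))
      refine noA M₁ hM₁ hcard₁ w (f y) ?_ ?_ ?_ ?_
      · rw [hv₁]
        rintro (⟨hm, -⟩ | h)
        · exact hwM hm
        · simp only [Set.mem_insert_iff, Set.mem_singleton_iff] at h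
          rcases h with rfl | rfl
          · exact hwu rfl
          · exact hwM hyv
      · rw [hv₁]
        rintro (⟨-, h⟩ | h)
        · exact h (by simp)
        · simp only [Set.mem_insert_iff, Set.mem_singleton_iff] at h
          rcases h with h | h
          · exact huM (by rw [← h]; exact hfv hyv)
          · exact hfne hyv h
      · exact fun h => hwM (by rw [h]; exact hfv hyv)
      · exact fun h => hfyC (by rw [← h]; exact hwC)
    -- `q` is not `G`-adjacent to `u`
    have hqRu : ¬ G.Adj q u := by
      intro hadj
      have hH : (pureH G₁ G₂).Adj u q :=
        pureH_of_adj hcol hadj.symm fun h => hqc (h ▸ hCdef.symm)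
      obtain ⟨M₁, hM₁, hv₁, -⟩ := aug1 hM (hf hqv) hH huM
      have huq' : u ≠ q := fun h => huM (by rw [h]; exact hqv)
      have hcard₁ : M₁.verts.ncard = K := by
        rw [hv₁, ← hMcard]
        exact ncard_swap hqv (hfv hqv) (hfne hqv).symm huq'
          (fun h => huM h.1) (fun h => h.2 (by simp))
      refine noA M₁ hM₁ hcard₁ w (f q) ?_ ?_ ?_ ?_
      · rw [hv₁]
        rintro (⟨hm, -⟩ | h)
        · exact hwM hm
        · simp only [Set.mem_insert_iff, Set.mem_singleton_iff] at h
          rcases h with rfl | rfl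
          · exact hwu rfl
          · exact hwM hqv
      · rw [hv₁]
        rintro (⟨-, h⟩ | h)
        · exact h (by simp)
        · simp only [Set.mem_insert_iff, Set.mem_singleton_iff] at h
          rcases h with h | h
          · exact huM (by rw [← h]; exact hfv hqv)
          · exact hfne hqv h
      · exact fun h => hwM (by rw [h]; exact hfv hqv)
      · exact fun h => hfqc (by rw [← h]; exact hwC)
    -- `q` is not `G`-adjacent to any partner of a `pureH`-neighbour of `u`
    have hqR2 : ∀ y, (pureH G₁ G₂).Adj u y → ¬ G.Adj q (f y) := by
      intro y hy hadj
      have hyv := hNcov y hy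
      have hryC : G₂.connectedComponentMk (f y) = C := hpart y hy
      have hH2 : (pureH G₁ G₂).Adj (f y) q :=
        pureH_of_adj hcol hadj.symm (fun h => hqc (h.symm.trans hryC))
      have hqy : q ≠ y := fun h => hfqc (by rw [h]; exact hryC)
      have hqfy : q ≠ f y := fun h => hqc (by rw [h]; exact hryC)
      have hfqy : f q ≠ y := by
        intro h
        have h2 := hff hqv
        rw [h] at h2
        exact hqfy h2.symm
      have hfqfy : f q ≠ f y := fun h => hfqc (by rw [h]; exact hryC)
      obtain ⟨M₁, hM₁, hv₁, hpres⟩ := aug1 hM (hf hyv) hy huM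
      have hqset : q ∉ ({y, f y} : Set V) := by simp [hqy, hqfy]
      have hfqset : f q ∉ ({y, f y} : Set V) := by simp [hfqy, hfqfy]
      have hM₁adj : M₁.Adj q (f q) := hpres (hf hqv) hqset hfqset
      have hfyM₁ : f y ∉ M₁.verts := by
        rw [hv₁]
        rintro (⟨-, h⟩ | h)
        · exact h (by simp)
        · simp only [Set.mem_insert_iff, Set.mem_singleton_iff] at h
          rcases h with h | h
          · exact huM (by rw [← h]; exact hfv hyv)
          · exact hfne hyv h
      obtain ⟨M₂, hM₂, hv₂, -⟩ := aug1 hM₁ hM₁adj hH2 hfyM₁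
      have huy' : u ≠ y := fun h => huM (by rw [h]; exact hyv)
      have hcard₁ : M₁.verts.ncard = K := by
        rw [hv₁, ← hMcard]
        exact ncard_swap hyv (hfv hyv) (hfne hyv).symm huy'
          (fun h => huM h.1) (fun h => h.2 (by simp))
      have hqM₁ : q ∈ M₁.verts := by
        rw [hv₁]
        exact Or.inl ⟨hqv, hqset⟩
      have hfqM₁ : f q ∈ M₁.verts := by
        rw [hv₁]
        exact Or.inl ⟨hfv hqv, hfqset⟩
      have hwM₁ : w ∉ M₁.verts := by
        rw [hv₁]
        rintro (⟨hm, -⟩ | h)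
        · exact hwM hm
        · simp only [Set.mem_insert_iff, Set.mem_singleton_iff] at h
          rcases h with rfl | rfl
          · exact hwu rfl
          · exact hwM hyv
      have hcard₂ : M₂.verts.ncard = K := by
        rw [hv₂, ← hcard₁]
        exact ncard_swap hqM₁ hfqM₁ (hfne hqv).symm hqfy.symm
          (fun h => hfyM₁ h.1) (fun h => h.2 (by simp))
      refine noA M₂ hM₂ hcard₂ w (f q) ?_ ?_ ?_ ?_
      · rw [hv₂]
        rintro (⟨hm, -⟩ | h)
        · exact hwM₁ hm
        · simp only [Set.mem_insert_iff, Set.mem_singleton_iff] at h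
          rcases h with h | h
          · exact hwM (by rw [h]; exact hfv hyv)
          · exact hwM (by rw [h]; exact hqv)
      · rw [hv₂]
        rintro (⟨-, h⟩ | h)
        · exact h (by simp)
        · simp only [Set.mem_insert_iff, Set.mem_singleton_iff] at h
          rcases h with h | h
          · exact hfqfy h
          · exact hfne hqv h
      · exact fun h => hwM (by rw [h]; exact hfv hqv)
      · exact fun h => hfqc (by rw [← h]; exact hwC)
    -- final counting
    set N := (pureH G₁ G₂).neighborSet u with hNdef
    have himgsub : f '' N ⊆ M.verts := by
      rintro z ⟨y, hy, rfl⟩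
      exact hfv (hNcov y hy)
    have hinjN : Set.InjOn f N := fun x1 h1 x2 h2 he => by
      rw [← hff (hNcov x1 h1), he, hff (hNcov x2 h2)]
    have huimg : u ∉ f '' N := fun h => huM (himgsub h)
    have hRcard : (insert u (f '' N)).ncard = N.ncard + 1 := by
      rw [Set.ncard_insert_of_notMem huimg, Set.ncard_image_of_injOn hinjN]
    have hRsub : insert u (f '' N) ⊆ Set.univ \ insert q (G.neighborSet q) := by
      intro z hz
      refine ⟨trivial, ?_⟩
      simp only [Set.mem_insert_iff] at hz
      rcases hz with rfl | hz
      · intro hz'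
        rcases Set.mem_insert_iff.mp hz' with h | h
        · exact huM (by rw [h]; exact hqv)
        · exact hqRu h
      · obtain ⟨y, hy, rfl⟩ := hz
        intro hz'
        rcases Set.mem_insert_iff.mp hz' with h | h
        · exact hqc (by rw [← h]; exact hpart y hy)
        · exact hqR2 y hy h
    have hdisjR : Disjoint (insert u (f '' N)) (insert q (G.neighborSet q)) := by
      rw [Set.disjoint_left]
      intro z hz hz'
      exact (hRsub hz).2 hz'
    have h6 : (insert u (f '' N)).ncard + (insert q (G.neighborSet q)).ncard
        ≤ Fintype.card V := by
      rw [← Set.ncard_union_eq hdisjR]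
      have := Set.ncard_le_ncard
        (Set.subset_univ (insert u (f '' N) ∪ insert q (G.neighborSet q)))
      simpa [Set.ncard_univ, Nat.card_eq_fintype_card] using this
    have h7 : (insert q (G.neighborSet q)).ncard = (G.neighborSet q).ncard + 1 := by
      have hqq : q ∉ G.neighborSet q := fun h => G.loopless.irrefl q h
      rw [Set.ncard_insert_of_notMem hqq]
    have hNGsub : G.neighborSet u ⊆ N ∪ C.supp := by
      intro z hz
      by_cases hzc : G₂.connectedComponentMk z = C
      · exact Or.inr ((ConnectedComponent.mem_supp_iff C z).mpr hzc)
      · exact Or.inl (pureH_of_adj hcol hz fun h => hzc (h ▸ hCdef.symm))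
    have hdegu : (G.neighborSet u).ncard ≤ N.ncard + C.supp.ncard :=
      le_trans (Set.ncard_le_ncard hNGsub) (Set.ncard_union_le _ _)
    have hδu := hδ4 u
    have hδq := hδ4 q
    have hcs := hcomp2 C
    omega
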